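/- Let V be a pseudovariety of ordered monoids, L ⊆ B* a regular language with syntactic ordered monoid Synt(L), and u, v pseudowords in Ω_A M. Then the inequality u ≤ v holds in Synt(L) if and only if for every monoid homomorphism α : A* → B* and all words x, y ∈ B*, x·\hat{α}(u)·y ∈ \overline{L} implies x·\hat{α}(v)·y ∈ \overline{L}. -/

import Mathlib

/-- The syntactic quasi-order of the language `L ⊆ B*`:
`u ≤_L v` iff for all words `x, y`, `x u y ∈ L` implies `x v y ∈ L`. -/
def synLe {B : Type*} (L : Set (FreeMonoid B)) (u v : FreeMonoid B) : Prop :=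
  ∀ x y : FreeMonoid B, x * u * y ∈ L → x * v * y ∈ L

/-- The syntactic congruence `≤_L ∩ ≥_L` of the language `L`. -/
def synCon {B : Type*} (L : Set (FreeMonoid B)) : Con (FreeMonoid B) where
  r u v := synLe L u v ∧ synLe L v u
  iseqv := ⟨fun _ => ⟨fun _ _ h => h, fun _ _ h => h⟩,
    fun h => ⟨h.2, h.1⟩,
    fun h1 h2 => ⟨fun x y h => h2.1 x y (h1.1 x y h), fun x y h => h1.2 x y (h2.2 x y h)⟩⟩
  mul' := by
    intro a b c d h1 h2
    refine ⟨fun p q h => ?_, fun p q h => ?_⟩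
    · have step1 := h1.1 p (c * q) (by simpa [mul_assoc] using h)
      have step2 := h2.1 (p * b) q (by simpa [mul_assoc] using step1)
      simpa [mul_assoc] using step2
    · have step1 := h1.2 p (d * q) (by simpa [mul_assoc] using h)
      have step2 := h2.2 (p * a) q (by simpa [mul_assoc] using step1)
      simpa [mul_assoc] using step2

/-- The syntactic monoid of `L`: the quotient of `B*` by the syntactic congruence. -/
def SyntMon {B : Type*} (L : Set (FreeMonoid B)) : Type _ :=
  (synCon L).Quotient

instance {B : Type*} (L : Set (FreeMonoid B)) : Monoid (SyntMon L) :=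
  inferInstanceAs (Monoid (synCon L).Quotient)

/-- The syntactic (partial) order on the syntactic monoid, induced by `≤_L`. -/
def sLe {B : Type*} (L : Set (FreeMonoid B)) : SyntMon L → SyntMon L → Prop :=
  Quotient.lift₂ (synLe L) (by
    intro a b c d h1 h2
    obtain ⟨h1l, h1r⟩ : synLe L a c ∧ synLe L c a := h1
    obtain ⟨h2l, h2r⟩ : synLe L b d ∧ synLe L d b := h2
    exact propext ⟨fun h x y hxy => h2l x y (h x y (h1r x y hxy)),
      fun h x y hxy => h2r x y (h x y (h1l x y hxy))⟩)

section Helpers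

variable {B : Type*} {L : Set (FreeMonoid B)}

lemma mem_of_synCon {w w' : FreeMonoid B} (h : synCon L w w') (hw : w ∈ L) : w' ∈ L := by
  have := h.1 1 1
  simpa using this (by simpa using hw)

lemma sLe_iff (L : Set (FreeMonoid B)) (m n : (synCon L).Quotient) :
    sLe L m n ↔ ∀ x y : FreeMonoid B,
      (synCon L).mk' x * m * (synCon L).mk' y ∈ ⇑(synCon L).mk' '' L →
      (synCon L).mk' x * n * (synCon L).mk' y ∈ ⇑(synCon L).mk' '' L := by
  refine Con.induction_on₂ m n fun a b => ?_
  constructor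
  · intro h x y hx
    have key : (synCon L).mk' x * ((a : (synCon L).Quotient)) * (synCon L).mk' y
        = (synCon L).mk' (x * a * y) := by
      simp [Con.coe_mk']
    rw [key] at hx
    obtain ⟨w, hwL, hw⟩ := hx
    have hrel : synCon L w (x * a * y) := by
      rw [Con.coe_mk'] at hw
      exact (Con.eq _).mp hw
    have hxa : x * a * y ∈ L := mem_of_synCon hrel hwL
    have hxb : x * b * y ∈ L := h x y hxa
    exact ⟨x * b * y, hxb, by simp [Con.coe_mk']⟩
  · intro h x y hxy
    have h1 : (synCon L).mk' x * ((a : (synCon L).Quotient)) * (synCon L).mk' y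
        ∈ ⇑(synCon L).mk' '' L := ⟨x * a * y, hxy, by simp [Con.coe_mk']⟩
    obtain ⟨w, hwL, hw⟩ := h x y h1
    have key : (synCon L).mk' x * ((b : (synCon L).Quotient)) * (synCon L).mk' y
        = (synCon L).mk' (x * b * y) := by
      simp [Con.coe_mk']
    rw [key, Con.coe_mk'] at hw
    exact mem_of_synCon ((Con.eq _).mp hw) hwL

end Helpers

/-- Auxiliary carrier in universe 0 with no ambient algebraic instances. -/
def SyntCarrier (n : ℕ) : Type := Fin n

/-- The defining equivalence of `SyntCarrier`. -/
def syntCarrierEquiv (n : ℕ) : SyntCarrier n ≃ Fin n := Equiv.refl (Fin n)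

instance (n : ℕ) : Finite (SyntCarrier n) := Finite.of_equiv (Fin n) (syntCarrierEquiv n).symm

/-- Let `MA`, `MB` be the free profinite monoids over the finite alphabets `A`, `B`
(axiomatized as below), `L ⊆ B*` a regular language (its syntactic monoid is finite) and
`u, v ∈ MA` pseudowords.  The inequality `u ≤ v` holds in the syntactic ordered monoid
`Synt(L)` (i.e. `ψ u ≤_L ψ v` for every continuous homomorphism `ψ : MA → Synt(L)`) if
and only if for every homomorphism `α : A* → B*` (with continuous extension
`α̂ : MA → MB`) and all words `x, y ∈ B*`, `x · α̂(u) · y ∈ closure L` implies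
`x · α̂(v) · y ∈ closure L`. -/
theorem ineq_syntactic_iff
    (V : ∀ (S : Type) [Monoid S] [PartialOrder S], Prop)  -- a pseudovariety of ordered monoids
    {A B MA MB : Type*} [Fintype A] [Fintype B]
    [Monoid MA] [TopologicalSpace MA] [CompactSpace MA] [T2Space MA]
    [Monoid MB] [TopologicalSpace MB] [CompactSpace MB] [T2Space MB]
    (hmulA : Continuous fun p : MA × MA => p.1 * p.2)
    (hmulB : Continuous fun p : MB × MB => p.1 * p.2)
    (ιA : FreeMonoid A →* MA) (ιB : FreeMonoid B →* MB)
    (hdA : DenseRange ⇑ιA) (hdB : DenseRange ⇑ιB)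
    (hextA : ∀ (N : Type) [Monoid N] [Finite N] (φ : FreeMonoid A →* N),
      ∃ ψ : MA →* N, (∀ s : Set N, IsOpen (⇑ψ ⁻¹' s)) ∧ ∀ u, ψ (ιA u) = φ u)
    (hextB : ∀ (N : Type) [Monoid N] [Finite N] (φ : FreeMonoid B →* N),
      ∃ ψ : MB →* N, (∀ s : Set N, IsOpen (⇑ψ ⁻¹' s)) ∧ ∀ u, ψ (ιB u) = φ u)
    (hlift : ∀ α : FreeMonoid A →* FreeMonoid B,
      ∃ hatα : MA →* MB, Continuous ⇑hatα ∧ ∀ u, hatα (ιA u) = ιB (α u))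
    (L : Set (FreeMonoid B)) (hreg : Finite (SyntMon L))
    (u v : MA) :
    (∀ ψ : MA →* SyntMon L, (∀ s : Set (SyntMon L), IsOpen (⇑ψ ⁻¹' s)) →
      sLe L (ψ u) (ψ v)) ↔
    (∀ (α : FreeMonoid A →* FreeMonoid B) (hatα : MA →* MB), Continuous ⇑hatα →
      (∀ w : FreeMonoid A, hatα (ιA w) = ιB (α w)) →
      ∀ x y : FreeMonoid B, ιB x * hatα u * ιB y ∈ closure (⇑ιB '' L) →
        ιB x * hatα v * ιB y ∈ closure (⇑ιB '' L)) := by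
  
  classical
  -- the syntactic projection
  set π : FreeMonoid B →* SyntMon L := (synCon L).mk' with hπdef
  -- transfer SyntMon L to universe 0
  obtain ⟨nn, ⟨e0⟩⟩ := Finite.exists_equiv_fin (SyntMon L)
  let e : SyntMon L ≃ SyntCarrier nn := e0.trans (syntCarrierEquiv nn).symm
  letI : Monoid (SyntCarrier nn) := e.symm.monoid
  let me : SyntCarrier nn ≃* SyntMon L := e.symm.mulEquiv
  -- extend π to a continuous homomorphism ψB : MB →* SyntMon L
  obtain ⟨ψN, hNopen, hNcomm⟩ :=
    hextB (SyntCarrier nn) (me.symm.toMonoidHom.comp π)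
  let ψB : MB →* SyntMon L := me.toMonoidHom.comp ψN
  have hψBopen : ∀ s : Set (SyntMon L), IsOpen (⇑ψB ⁻¹' s) := fun s => hNopen (⇑me ⁻¹' s)
  have hψBι : ∀ w : FreeMonoid B, ψB (ιB w) = π w := by
    intro w
    show me (ψN (ιB w)) = π w
    rw [hNcomm w]
    simp
  -- characterization of the closure of ιB '' L
  have hclos : ∀ z : MB, z ∈ closure (⇑ιB '' L) ↔ ψB z ∈ ⇑π '' L := by
    intro z
    constructor
    · intro hz
      have hclosed : IsClosed (⇑ψB ⁻¹' (⇑π '' L)) := by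
        rw [← isOpen_compl_iff, ← Set.preimage_compl]
        exact hψBopen _
      have hsub : ⇑ιB '' L ⊆ ⇑ψB ⁻¹' (⇑π '' L) := by
        rintro _ ⟨w, hw, rfl⟩
        exact ⟨w, hw, (hψBι w).symm⟩
      exact closure_minimal hsub hclosed hz
    · intro hz
      rw [mem_closure_iff]
      intro U hU hzU
      obtain ⟨w, hwU, hwψ⟩ := hdB.exists_mem_open (hU.inter (hψBopen (⇑π '' L)))
        ⟨z, hzU, hz⟩
      have hwψ' : π w ∈ ⇑π '' L := by rw [← hψBι w]; exact hwψ
      obtain ⟨w', hw'L, hw'⟩ := hwψ'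
      have hwL : w ∈ L :=
        mem_of_synCon ((Con.eq _).mp hw') hw'L
      exact ⟨ιB w, hwU, ⟨w, hwL, rfl⟩⟩
  constructor
  · intro H α hatα hcont hcomm x y hx
    set ψ : MA →* SyntMon L := ψB.comp hatα with hψdef
    have hψopen : ∀ s : Set (SyntMon L), IsOpen (⇑ψ ⁻¹' s) := fun s =>
      hcont.isOpen_preimage _ (hψBopen s)
    have hs := H ψ hψopen
    rw [sLe_iff L (ψ u) (ψ v)] at hs
    have h1 := (hclos _).1 hx
    have e1 : ψB (ιB x * hatα u * ιB y) = π x * ψ u * π y := by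
      simp only [map_mul, hψBι]
      rfl
    rw [e1] at h1
    have h2 := hs x y h1
    refine (hclos _).2 ?_
    have e2 : ψB (ιB x * hatα v * ιB y) = π x * ψ v * π y := by
      simp only [map_mul, hψBι]
      rfl
    rw [e2]
    exact h2
  · intro H ψ hψopen
    -- build a homomorphism α : A* → B* lifting ψ ∘ ιA through π
    let α : FreeMonoid A →* FreeMonoid B :=
      FreeMonoid.lift fun a =>
        Quotient.out (ψ (ιA (FreeMonoid.of a)) : (synCon L).Quotient)
    have hπα : ∀ w : FreeMonoid A, π (α w) = ψ (ιA w) := by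
      have : π.comp α = ψ.comp ιA := by
        refine FreeMonoid.hom_eq fun a => ?_
        show π (α (FreeMonoid.of a)) = ψ (ιA (FreeMonoid.of a))
        have hα : α (FreeMonoid.of a)
            = Quotient.out (ψ (ιA (FreeMonoid.of a)) : (synCon L).Quotient) := by
          simp [α]
        rw [hα]
        show ((Quotient.out (ψ (ιA (FreeMonoid.of a)) : (synCon L).Quotient) : FreeMonoid B) :
          (synCon L).Quotient) = _
        exact Quotient.out_eq' _
      intro w
      exact DFunLike.congr_fun this w
    obtain ⟨hatα, hacont, hacomm⟩ := hlift α
    letI : TopologicalSpace (SyntMon L) := ⊥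
    haveI : DiscreteTopology (SyntMon L) := ⟨rfl⟩
    have hψc : Continuous ⇑ψ := continuous_def.mpr fun s _ => hψopen s
    have hψBc : Continuous ⇑ψB := continuous_def.mpr fun s _ => hψBopen s
    have heq : ⇑ψ = ⇑ψB ∘ ⇑hatα := by
      refine hdA.equalizer hψc (hψBc.comp hacont) (funext fun w => ?_)
      show ψ (ιA w) = ψB (hatα (ιA w))
      rw [hacomm w, hψBι, hπα]
    rw [sLe_iff L (ψ u) (ψ v)]
    intro x y h1
    have hψu : ψ u = ψB (hatα u) := congrFun heq u
    have hψv : ψ v = ψB (hatα v) := congrFun heq v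
    have hu : ιB x * hatα u * ιB y ∈ closure (⇑ιB '' L) := by
      refine (hclos _).2 ?_
      have e1 : ψB (ιB x * hatα u * ιB y) = π x * ψ u * π y := by
        simp only [map_mul, hψBι, hψu]
      rw [e1]
      exact h1
    have hv := H α hatα hacont hacomm x y hu
    have h2 := (hclos _).1 hv
    have e2 : ψB (ιB x * hatα v * ιB y) = π x * ψ v * π y := by
      simp only [map_mul, hψBι, hψv]
    rw [e2] at h2
    exact h2
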